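/- For natural numbers ℓ, j, n with n ≥ 3, the integral λ(n,ℓ,j) = ∫₋₁¹ t^(2ℓ) P_j(t) (1-t²)^((n-3)/2) dt equals √π/2^(2ℓ) · Γ((n-1)/2)Γ(2ℓ+1) / (Γ(ℓ+1-j/2)Γ(ℓ+(n+j)/2)) when j is even and j ≤ 2ℓ, and equals 0 when j is odd or j > 2ℓ. -/

import Mathlib

open MeasureTheory Real

/-- The Gegenbauer polynomial (in dimension `n`) given by the Rodrigues formula
`P_j(t) = (-1/2)^j · (Γ((n-1)/2)/Γ(j+(n-1)/2)) · (1-t²)^(-(n-3)/2) · (d/dt)^j (1-t²)^(j+(n-3)/2)`. -/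
noncomputable def gegenbauerP (n j : ℕ) (t : ℝ) : ℝ :=
  (-(1 : ℝ) / 2) ^ j * (Real.Gamma (((n : ℝ) - 1) / 2) / Real.Gamma ((j : ℝ) + ((n : ℝ) - 1) / 2)) *
    (1 - t ^ 2) ^ (-(((n : ℝ) - 3) / 2)) *
    iteratedDeriv j (fun s : ℝ => (1 - s ^ 2) ^ ((j : ℝ) + ((n : ℝ) - 3) / 2)) t

/-- The Funk–Hecke coefficient `λ(n,ℓ,j) = ∫₋₁¹ t^(2ℓ) P_j(t) (1-t²)^((n-3)/2) dt`. -/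
noncomputable def lamFH (n ℓ j : ℕ) : ℝ :=
  ∫ t in (-1 : ℝ)..(1 : ℝ), t ^ (2 * ℓ) * gegenbauerP n j t * (1 - t ^ 2) ^ (((n : ℝ) - 3) / 2)


open Polynomial in
lemma aux_hasDerivAt (Q : Polynomial ℝ) {q : ℝ} (hq : 1 ≤ q) (t : ℝ) :
    HasDerivAt (fun s : ℝ => Q.eval s * (1 - s ^ 2) ^ q)
      ((Q.derivative * (1 - X ^ 2) + C (-2*q) * (X * Q)).eval t * (1 - t ^ 2) ^ (q - 1)) t := by
  have hbase : HasDerivAt (fun s : ℝ => 1 - s ^ 2) (-(2 * t)) t := by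
    simpa using ((hasDerivAt_pow 2 t).const_sub 1)
  have hr : HasDerivAt (fun s : ℝ => (1 - s ^ 2) ^ q)
      (-(2 * t) * q * (1 - t ^ 2) ^ (q - 1)) t :=
    hbase.rpow_const (Or.inr hq)
  have h : HasDerivAt (fun s : ℝ => Q.eval s * (1 - s ^ 2) ^ q) _ t := (Q.hasDerivAt t).mul hr
  convert h using 1
  simp only [Polynomial.eval_add, Polynomial.eval_mul, Polynomial.eval_sub, Polynomial.eval_pow,
    Polynomial.eval_one, Polynomial.eval_C, Polynomial.eval_X]
  rcases eq_or_ne (1 - t ^ 2) 0 with h0 | h0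
  · rw [h0]
    rw [Real.zero_rpow (by linarith : q ≠ 0)]
    ring
  · have : (1 - t ^ 2) ^ q = (1 - t ^ 2) ^ (q - 1) * (1 - t ^ 2) := by
      rw [← Real.rpow_add_one h0]; ring_nf
    rw [this]; ring

open Polynomial in
lemma aux_iteratedDeriv {p : ℝ} :
    ∀ k : ℕ, (k : ℝ) ≤ p → ∃ Q : Polynomial ℝ,
      ∀ t, iteratedDeriv k (fun s : ℝ => (1 - s ^ 2) ^ p) t = Q.eval t * (1 - t ^ 2) ^ (p - k) := by
  intro k
  induction k with
  | zero => intro _; exact ⟨1, fun t => by simp⟩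
  | succ k ih =>
    intro hk1
    have hk : (k : ℝ) ≤ p := by push_cast at hk1 ⊢; linarith
    obtain ⟨Q, hQ⟩ := ih hk
    have hq : 1 ≤ p - k := by push_cast at hk1; linarith
    refine ⟨Q.derivative * (1 - X ^ 2) + C (-2*(p - k)) * (X * Q), fun t => ?_⟩
    rw [iteratedDeriv_succ]
    have hfe : iteratedDeriv k (fun s : ℝ => (1 - s ^ 2) ^ p)
        = fun t => Q.eval t * (1 - t ^ 2) ^ (p - k) := funext hQ
    rw [hfe]
    have h := (aux_hasDerivAt Q hq t).deriv
    rw [h]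
    have : p - (k : ℝ) - 1 = p - (k + 1 : ℕ) := by push_cast; ring
    rw [this]

lemma aux_cont {c : ℝ} (hc : 0 ≤ c) : Continuous (fun t : ℝ => (1 - t ^ 2) ^ c) := by
  have hbase : Continuous (fun t : ℝ => 1 - t ^ 2) := by continuity
  refine continuous_iff_continuousAt.2 fun t => ?_
  exact (Real.continuousAt_rpow_const _ _ (Or.inr hc)).comp hbase.continuousAt

lemma aux_ibp {p : ℝ} {k : ℕ} (hk1 : (k : ℝ) + 1 ≤ p) (m : ℕ) :
    (∫ t in (-1:ℝ)..1, t ^ m * iteratedDeriv (k+1) (fun s : ℝ => (1 - s ^ 2) ^ p) t)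
      = -(m:ℝ) * ∫ t in (-1:ℝ)..1, t ^ (m-1) * iteratedDeriv k (fun s : ℝ => (1 - s ^ 2) ^ p) t := by
  set f : ℝ → ℝ := fun s : ℝ => (1 - s ^ 2) ^ p with hf
  obtain ⟨Q, hQ⟩ := aux_iteratedDeriv (p := p) k (by linarith)
  obtain ⟨Q', hQ'⟩ := aux_iteratedDeriv (p := p) (k+1) (by push_cast; linarith)
  have hfe : iteratedDeriv k f = fun t => Q.eval t * (1 - t ^ 2) ^ (p - k) := funext hQ
  have hq : 1 ≤ p - k := by linarith
  have hderiv : ∀ x : ℝ, HasDerivAt (iteratedDeriv k f) (iteratedDeriv (k+1) f x) x := by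
    intro x
    have h := aux_hasDerivAt Q hq x
    rw [← hfe] at h
    have hd : iteratedDeriv (k+1) f x = deriv (iteratedDeriv k f) x := by
      rw [iteratedDeriv_succ]
    rw [hd, h.deriv]
    exact h
  have hu : ∀ x ∈ Set.uIcc (-1:ℝ) 1, HasDerivAt (fun t : ℝ => t ^ m) ((m:ℝ) * x ^ (m-1)) x :=
    fun x _ => hasDerivAt_pow m x
  have hv : ∀ x ∈ Set.uIcc (-1:ℝ) 1, HasDerivAt (iteratedDeriv k f) (iteratedDeriv (k+1) f x) x :=
    fun x _ => hderiv x
  have hcont1 : Continuous (fun x : ℝ => (m:ℝ) * x ^ (m-1)) := by continuity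
  have hcont2 : Continuous (iteratedDeriv (k+1) f) := by
    rw [funext hQ']
    exact Q'.continuous_aeval.mul (aux_cont (by push_cast at hk1 ⊢; linarith))
  have h := intervalIntegral.integral_mul_deriv_eq_deriv_mul hu hv
    (hcont1.intervalIntegrable _ _) (hcont2.intervalIntegrable _ _)
  rw [h]
  have hb1 : iteratedDeriv k f 1 = 0 := by
    rw [hQ, show (1:ℝ) - 1 ^ 2 = 0 by norm_num,
      Real.zero_rpow (by linarith : p - (k:ℝ) ≠ 0), mul_zero]
  have hb2 : iteratedDeriv k f (-1) = 0 := by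
    rw [hQ, show (1:ℝ) - (-1:ℝ) ^ 2 = 0 by norm_num,
      Real.zero_rpow (by linarith : p - (k:ℝ) ≠ 0), mul_zero]
  have hc : ∫ x in (-1:ℝ)..1, (m:ℝ) * x ^ (m-1) * iteratedDeriv k f x
      = (m:ℝ) * ∫ x in (-1:ℝ)..1, x ^ (m-1) * iteratedDeriv k f x := by
    rw [← intervalIntegral.integral_const_mul]
    exact intervalIntegral.integral_congr fun x _ => by ring
  rw [hb1, hb2, hc]; ring

lemma aux_main {p : ℝ} :
    ∀ k : ℕ, (k : ℝ) ≤ p → ∀ m : ℕ,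
    (∫ t in (-1:ℝ)..1, t ^ m * iteratedDeriv k (fun s : ℝ => (1 - s ^ 2) ^ p) t)
      = if k ≤ m then ((-1:ℝ)^k * (m.descFactorial k)) *
          ∫ t in (-1:ℝ)..1, t ^ (m - k) * (1 - t ^ 2) ^ p else 0 := by
  intro k
  induction k with
  | zero =>
    intro _ m
    simp [iteratedDeriv_zero]
  | succ k ih =>
    intro hk1 m
    have hk : (k : ℝ) + 1 ≤ p := by push_cast at hk1; linarith
    rw [aux_ibp hk m]
    rcases m with _ | m'
    · simp only [Nat.cast_zero, neg_zero, zero_mul]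
      rw [if_neg (by omega)]
    · rw [ih (by linarith) ]
      rcases le_or_gt (k+1) (m'+1) with hle | hlt
      · rw [if_pos (by omega), if_pos (by omega)]
        rw [Nat.succ_descFactorial_succ]
        push_cast; ring
      · rw [if_neg (by omega), if_neg (by omega), mul_zero]

lemma aux_odd {p : ℝ} {m : ℕ} (hm : Odd m) :
    (∫ t in (-1:ℝ)..1, t ^ m * (1 - t ^ 2) ^ p) = 0 := by
  have h := intervalIntegral.integral_comp_neg (a := (-1:ℝ)) (b := 1)
    (fun t : ℝ => t ^ m * (1 - t ^ 2) ^ p)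
  simp only [neg_neg] at h
  have h2 : (∫ t in (-1:ℝ)..1, (-t) ^ m * (1 - (-t) ^ 2) ^ p)
      = ∫ t in (-1:ℝ)..1, -(t ^ m * (1 - t ^ 2) ^ p) := by
    refine intervalIntegral.integral_congr fun x _ => ?_
    rw [hm.neg_pow]; ring_nf
  rw [h2, intervalIntegral.integral_neg] at h
  linarith

lemma aux_even_split {p : ℝ} (hp : 0 ≤ p) {m : ℕ} (hm : Even m) :
    (∫ t in (-1:ℝ)..1, t ^ m * (1 - t ^ 2) ^ p)
      = 2 * ∫ t in (0:ℝ)..1, t ^ m * (1 - t ^ 2) ^ p := by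
  have hcont : Continuous (fun t : ℝ => t ^ m * (1 - t ^ 2) ^ p) :=
    (continuous_pow m).mul (aux_cont hp)
  have hsplit := intervalIntegral.integral_add_adjacent_intervals
    (μ := volume) (a := (-1:ℝ)) (b := 0) (c := 1)
    (hcont.intervalIntegrable _ _) (hcont.intervalIntegrable _ _)
  have h := intervalIntegral.integral_comp_neg (a := (0:ℝ)) (b := 1)
    (fun t : ℝ => t ^ m * (1 - t ^ 2) ^ p)
  simp only [neg_zero] at h
  have h2 : (∫ t in (0:ℝ)..1, (-t) ^ m * (1 - (-t) ^ 2) ^ p)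
      = ∫ t in (0:ℝ)..1, t ^ m * (1 - t ^ 2) ^ p := by
    refine intervalIntegral.integral_congr fun x _ => ?_
    rw [hm.neg_pow]; ring_nf
  rw [h2] at h
  rw [← hsplit, ← h]; ring

lemma aux_subst {p : ℝ} (m : ℕ) :
    (∫ u in (0:ℝ)..1, u ^ ((m:ℝ) - 1/2) * (1 - u) ^ p)
      = 2 * ∫ t in (0:ℝ)..1, t ^ (2*m) * (1 - t ^ 2) ^ p := by
  have himg : (fun t : ℝ => t ^ 2) '' Set.Ioo 0 1 = Set.Ioo 0 1 := by
    ext u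
    constructor
    · rintro ⟨t, ⟨ht0, ht1⟩, rfl⟩
      simp only [Set.mem_Ioo]
      exact ⟨by positivity, by nlinarith⟩
    · rintro ⟨hu0, hu1⟩
      have hs1 : Real.sqrt u < 1 := by
        rw [show (1:ℝ) = Real.sqrt 1 by simp]
        exact Real.sqrt_lt_sqrt hu0.le hu1
      exact ⟨Real.sqrt u, ⟨Real.sqrt_pos.2 hu0, hs1⟩, Real.sq_sqrt hu0.le⟩
  have hinj : Set.InjOn (fun t : ℝ => t ^ 2) (Set.Ioo 0 1) := by
    intro a ha b hb hab
    simp only at hab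
    have h2 : (a - b) * (a + b) = 0 := by linear_combination hab
    rcases mul_eq_zero.1 h2 with h | h
    · linarith
    · exfalso; rcases ha with ⟨ha0, _⟩; rcases hb with ⟨hb0, _⟩; linarith
  have hderiv : ∀ x ∈ Set.Ioo (0:ℝ) 1,
      HasDerivWithinAt (fun t : ℝ => t ^ 2) (2 * x) (Set.Ioo 0 1) x := by
    intro x _
    simpa using (hasDerivAt_pow 2 x).hasDerivWithinAt
  have h := integral_image_eq_integral_abs_deriv_smul (f' := fun x : ℝ => 2 * x)
    measurableSet_Ioo hderiv hinj (fun u : ℝ => u ^ ((m:ℝ) - 1/2) * (1 - u) ^ p)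
  rw [himg] at h
  have heq : ∀ t ∈ Set.Ioo (0:ℝ) 1,
      |2 * t| • ((t ^ 2 : ℝ) ^ ((m:ℝ) - 1/2) * (1 - t ^ 2) ^ p)
        = 2 * (t ^ (2*m) * (1 - t ^ 2) ^ p) := by
    intro t ⟨ht0, ht1⟩
    rw [smul_eq_mul, abs_of_pos (by linarith)]
    have h1 : (t ^ 2 : ℝ) ^ ((m:ℝ) - 1/2) = t ^ (2 * ((m:ℝ) - 1/2)) := by
      rw [← Real.rpow_natCast t 2, ← Real.rpow_mul ht0.le]
      norm_num
    have h2 : (2 * t) * t ^ (2 * ((m:ℝ) - 1/2)) = 2 * t ^ ((2*m : ℕ) : ℝ) := by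
      rw [show (2 * ((m:ℝ) - 1/2)) = ((2*m : ℕ) : ℝ) - 1 by push_cast; ring]
      rw [show ((2*m : ℕ) : ℝ) = (((2*m : ℕ) : ℝ) - 1) + 1 by ring,
        Real.rpow_add_one (ne_of_gt ht0)]
      ring_nf
    rw [h1, ← mul_assoc, ← mul_assoc, h2, Real.rpow_natCast]
  rw [intervalIntegral.integral_of_le (by norm_num : (0:ℝ) ≤ 1),
    intervalIntegral.integral_of_le (by norm_num : (0:ℝ) ≤ 1),
    integral_Ioc_eq_integral_Ioo, integral_Ioc_eq_integral_Ioo, h]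
  rw [← integral_const_mul]
  exact setIntegral_congr_fun measurableSet_Ioo heq

lemma aux_beta {a b : ℝ} (ha : 0 < a) (hb : 0 < b) :
    (∫ x in (0:ℝ)..1, x ^ (a - 1) * (1 - x) ^ (b - 1))
      = Real.Gamma a * Real.Gamma b / Real.Gamma (a + b) := by
  have hC := Complex.Gamma_mul_Gamma_eq_betaIntegral
    (s := (a:ℂ)) (t := (b:ℂ)) (by simpa using ha) (by simpa using hb)
  have hid : Complex.betaIntegral (a:ℂ) (b:ℂ)
      = ((∫ x in (0:ℝ)..1, x ^ (a - 1) * (1 - x) ^ (b - 1) : ℝ) : ℂ) := by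
    rw [Complex.betaIntegral]
    rw [← intervalIntegral.integral_ofReal]
    refine intervalIntegral.integral_congr fun x hx => ?_
    rw [Set.uIcc_of_le (by norm_num : (0:ℝ) ≤ 1)] at hx
    obtain ⟨hx0, hx1⟩ := hx
    rw [show ((1:ℂ) - (x:ℂ)) = ((1 - x : ℝ) : ℂ) by push_cast; ring,
      show ((a:ℂ) - 1) = ((a - 1 : ℝ) : ℂ) by push_cast; ring,
      show ((b:ℂ) - 1) = ((b - 1 : ℝ) : ℂ) by push_cast; ring,
      ← Complex.ofReal_cpow hx0, ← Complex.ofReal_cpow (by linarith : (0:ℝ) ≤ 1 - x),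
      ← Complex.ofReal_mul]
  rw [hid] at hC
  have h2 : ((Real.Gamma a * Real.Gamma b : ℝ) : ℂ)
      = ((Real.Gamma (a + b) * ∫ x in (0:ℝ)..1, x ^ (a - 1) * (1 - x) ^ (b - 1) : ℝ) : ℂ) := by
    push_cast
    rw [← Complex.Gamma_ofReal, ← Complex.Gamma_ofReal, ← Complex.Gamma_ofReal]
    push_cast at hC ⊢
    rw [hC]
  have h3 := Complex.ofReal_inj.1 h2
  have hne : Real.Gamma (a + b) ≠ 0 := (Real.Gamma_pos_of_pos (by linarith)).ne'
  field_simp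
  linarith [h3]

lemma aux_gamma_half (m : ℕ) :
    Real.Gamma ((m:ℝ) + 1/2) * (m.factorial : ℝ)
      = Real.sqrt π * ((2*m).factorial : ℝ) / 2 ^ (2*m) := by
  have h := Real.Gamma_mul_Gamma_add_half ((m:ℝ) + 1/2)
  rw [show ((m:ℝ) + 1/2 + 1/2) = (m:ℝ) + 1 by ring] at h
  rw [Real.Gamma_nat_eq_factorial m] at h
  rw [show (2 * ((m:ℝ) + 1/2)) = ((2*m : ℕ) : ℝ) + 1 by push_cast; ring] at h
  rw [Real.Gamma_nat_eq_factorial (2*m)] at h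
  rw [show (1 - (((2*m : ℕ) : ℝ) + 1)) = -((2*m : ℕ) : ℝ) by ring] at h
  rw [Real.rpow_neg (by norm_num : (0:ℝ) ≤ 2), Real.rpow_natCast] at h
  rw [h]
  have : (0:ℝ) < 2 ^ (2*m) := by positivity
  field_simp

lemma aux_link (n ℓ j : ℕ) (hn : 3 ≤ n) :
    lamFH n ℓ j = ((-(1 : ℝ) / 2) ^ j *
        (Real.Gamma (((n : ℝ) - 1) / 2) / Real.Gamma ((j : ℝ) + ((n : ℝ) - 1) / 2))) *
      ∫ t in (-1:ℝ)..1, t ^ (2 * ℓ) *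
        iteratedDeriv j (fun s : ℝ => (1 - s ^ 2) ^ ((j : ℝ) + ((n : ℝ) - 3) / 2)) t := by
  set c : ℝ := (-(1 : ℝ) / 2) ^ j *
    (Real.Gamma (((n : ℝ) - 1) / 2) / Real.Gamma ((j : ℝ) + ((n : ℝ) - 1) / 2)) with hc
  set D : ℝ → ℝ :=
    iteratedDeriv j (fun s : ℝ => (1 - s ^ 2) ^ ((j : ℝ) + ((n : ℝ) - 3) / 2)) with hD
  rw [lamFH, ← intervalIntegral.integral_const_mul]
  rw [intervalIntegral.integral_of_le (by norm_num : (-1:ℝ) ≤ 1),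
    intervalIntegral.integral_of_le (by norm_num : (-1:ℝ) ≤ 1),
    integral_Ioc_eq_integral_Ioo, integral_Ioc_eq_integral_Ioo]
  refine setIntegral_congr_fun measurableSet_Ioo fun t ht => ?_
  obtain ⟨ht0, ht1⟩ := ht
  have hpos : 0 < 1 - t ^ 2 := by nlinarith
  have hcancel : (1 - t ^ 2) ^ (-(((n : ℝ) - 3) / 2)) * (1 - t ^ 2) ^ (((n : ℝ) - 3) / 2)
      = 1 := by
    rw [← Real.rpow_add hpos]
    norm_num
  show t ^ (2 * ℓ) * gegenbauerP n j t * (1 - t ^ 2) ^ (((n : ℝ) - 3) / 2)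
      = c * (t ^ (2 * ℓ) * D t)
  rw [gegenbauerP]
  rw [← hc, ← hD]
  calc t ^ (2 * ℓ) * (c * (1 - t ^ 2) ^ (-(((n : ℝ) - 3) / 2)) * D t) *
      (1 - t ^ 2) ^ (((n : ℝ) - 3) / 2)
      = c * (t ^ (2 * ℓ) * D t) *
        ((1 - t ^ 2) ^ (-(((n : ℝ) - 3) / 2)) * (1 - t ^ 2) ^ (((n : ℝ) - 3) / 2)) := by ring
    _ = c * (t ^ (2 * ℓ) * D t) := by rw [hcancel, mul_one]


/-- For `n ≥ 3`, the Funk–Hecke coefficient `λ(n,ℓ,j)` equals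
`√π/2^(2ℓ) · Γ((n-1)/2)Γ(2ℓ+1)/(Γ(ℓ+1-j/2)Γ(ℓ+(n+j)/2))` when `j` is even and `j ≤ 2ℓ`,
and equals `0` when `j` is odd or `j > 2ℓ`. -/
theorem stmt2 (n ℓ j : ℕ) (hn : 3 ≤ n) :
    (Even j → j ≤ 2 * ℓ →
      lamFH n ℓ j = Real.sqrt π / 2 ^ (2 * ℓ) *
        (Real.Gamma (((n : ℝ) - 1) / 2) * Real.Gamma (2 * (ℓ : ℝ) + 1)) /
        (Real.Gamma ((ℓ : ℝ) + 1 - (j : ℝ) / 2) *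
          Real.Gamma ((ℓ : ℝ) + ((n : ℝ) + (j : ℝ)) / 2))) ∧
    (Odd j ∨ 2 * ℓ < j → lamFH n ℓ j = 0) := by
  
  have hn3 : (3:ℝ) ≤ (n:ℝ) := by exact_mod_cast hn
  set p : ℝ := (j:ℝ) + ((n:ℝ) - 3) / 2 with hpdef
  have hα : 0 ≤ ((n:ℝ) - 3) / 2 := by linarith
  have hjp : (j:ℝ) ≤ p := by rw [hpdef]; linarith
  have hp0 : 0 ≤ p := le_trans (Nat.cast_nonneg j) hjp
  have hlink := aux_link n ℓ j hn
  have hmain := aux_main (p := p) j hjp (2*ℓ)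
  constructor
  · -- even case
    intro hev hle
    obtain ⟨i, hi⟩ := hev
    have hile : i ≤ ℓ := by omega
    have hi2 : j = 2 * i := by omega
    set m : ℕ := ℓ - i with hmdef
    have h2m : 2*ℓ - j = 2*m := by omega
    have hmcast : (m:ℝ) = (ℓ:ℝ) - (i:ℝ) := by
      rw [hmdef, Nat.cast_sub hile]
    rw [if_pos hle, h2m] at hmain
    rw [aux_even_split (p := p) hp0 (even_two_mul m), ← aux_subst] at hmain
    have hbeta : (∫ x in (0:ℝ)..1, x ^ ((m:ℝ) - 1/2) * (1 - x) ^ p)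
        = Real.Gamma ((m:ℝ) + 1/2) * Real.Gamma (p + 1)
          / Real.Gamma ((m:ℝ) + 1/2 + (p + 1)) := by
      have h := aux_beta (a := (m:ℝ) + 1/2) (b := p + 1)
        (by positivity) (by linarith)
      rw [show ((m:ℝ) + 1/2) - 1 = (m:ℝ) - 1/2 by ring,
        show (p + 1) - 1 = p by ring] at h
      exact h
    rw [hbeta] at hmain
    rw [hlink, hmain]
    -- now pure Gamma algebra
    have hG1 : Real.Gamma (2 * (ℓ:ℝ) + 1) = ((2*ℓ).factorial : ℝ) := by
      rw [show 2 * (ℓ:ℝ) + 1 = ((2*ℓ : ℕ) : ℝ) + 1 by push_cast; ring,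
        Real.Gamma_nat_eq_factorial]
    have hG2 : Real.Gamma ((ℓ:ℝ) + 1 - (j:ℝ) / 2) = (m.factorial : ℝ) := by
      rw [show (ℓ:ℝ) + 1 - (j:ℝ) / 2 = (m:ℝ) + 1 by
          rw [hmcast]; rw [hi2]; push_cast; ring,
        Real.Gamma_nat_eq_factorial]
    have hG3 : Real.Gamma ((ℓ:ℝ) + ((n:ℝ) + (j:ℝ)) / 2)
        = Real.Gamma ((m:ℝ) + 1/2 + (p + 1)) := by
      congr 1
      rw [hmcast, hpdef, hi2]; push_cast; ring
    have hG4 : Real.Gamma (p + 1) = Real.Gamma ((j:ℝ) + ((n:ℝ) - 1) / 2) := by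
      congr 1
      rw [hpdef]; ring
    have hGJpos : 0 < Real.Gamma ((j:ℝ) + ((n:ℝ) - 1) / 2) :=
      Real.Gamma_pos_of_pos (by have := Nat.cast_nonneg (α := ℝ) j; linarith)
    have hGDpos : 0 < Real.Gamma ((m:ℝ) + 1/2 + (p + 1)) :=
      Real.Gamma_pos_of_pos (by have := Nat.cast_nonneg (α := ℝ) m; linarith)
    have hdesc : ((2*m).factorial : ℝ) * (((2*ℓ).descFactorial j : ℕ) : ℝ)
        = ((2*ℓ).factorial : ℝ) := by
      rw [← h2m]
      exact_mod_cast congrArg (Nat.cast (R := ℝ)) (Nat.factorial_mul_descFactorial hle)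
    have hgh := aux_gamma_half m
    rw [hG1, hG2, hG3, hG4]
    have hne2 : Real.Gamma ((m:ℝ) + 1/2 + (p + 1)) ≠ 0 := ne_of_gt hGDpos
    have hne3 : (m.factorial : ℝ) ≠ 0 := Nat.cast_ne_zero.2 m.factorial_ne_zero
    have hne4 : ((2*m).factorial : ℝ) ≠ 0 := Nat.cast_ne_zero.2 (2*m).factorial_ne_zero
    have hGm : Real.Gamma ((m:ℝ) + 1/2)
        = Real.sqrt π * ((2*m).factorial : ℝ) / (2 ^ (2*m) * (m.factorial : ℝ)) := by
      have h2 : ((2:ℝ) ^ (2*m)) ≠ 0 := by positivity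
      rw [eq_div_iff (by positivity : (2:ℝ) ^ (2*m) * (m.factorial : ℝ) ≠ 0)]
      rw [eq_div_iff h2] at hgh
      linear_combination hgh
    have hdesc' : (((2*ℓ).descFactorial j : ℕ) : ℝ)
        = ((2*ℓ).factorial : ℝ) / ((2*m).factorial : ℝ) := by
      field_simp
      linarith [hdesc]
    have hone : ((-(1:ℝ))/2) ^ j * (-1:ℝ) ^ j = ((2:ℝ) ^ j)⁻¹ := by
      rw [← mul_pow, show ((-(1:ℝ))/2) * (-1) = (2:ℝ)⁻¹ by norm_num, inv_pow]
    have hneJ : Real.Gamma ((j:ℝ) + ((n:ℝ) - 1) / 2) ≠ 0 := ne_of_gt hGJpos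
    have hpow2 : (2:ℝ) ^ (2*ℓ) = 2 ^ j * 2 ^ (2*m) := by
      rw [← pow_add]
      congr 1
      omega
    rw [hpow2]
    have h2j : ((2:ℝ) ^ j) ≠ 0 := by positivity
    have h2m' : ((2:ℝ) ^ (2*m)) ≠ 0 := by positivity
    rw [hGm, hdesc']
    set G1 : ℝ := Real.Gamma (((n:ℝ) - 1) / 2) with hG1def
    set GJ : ℝ := Real.Gamma ((j:ℝ) + ((n:ℝ) - 1) / 2) with hGJdef
    set GD : ℝ := Real.Gamma ((m:ℝ) + 1/2 + (p + 1)) with hGDdef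
    field_simp
    have hsq : ((-1:ℝ)) ^ j * (-1) ^ j = 1 := by
      rw [← mul_pow]; norm_num
    have hthree : ((-(1/2:ℝ)) * (-1) * 2) ^ j = 1 := by norm_num
    rw [mul_pow, mul_pow] at hthree
    linear_combination G1 * hthree
  · -- zero case
    intro h
    rcases le_or_gt j (2*ℓ) with hle | hlt
    · have hodd : Odd j := by
        rcases h with h | h
        · exact h
        · omega
      rw [if_pos hle] at hmain
      have hodd2 : Odd (2*ℓ - j) := Nat.Even.sub_odd hle (even_two_mul ℓ) hodd
      rw [aux_odd hodd2, mul_zero] at hmain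
      rw [hlink, hmain, mul_zero]
    · rw [if_neg (by omega)] at hmain
      rw [hlink, hmain, mul_zero]
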